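/- Let g : ℝ_{>0} → ℝ, g(t) = ∑_{i=1}^{d} a_i t^{ν_i} be a univariate signomial with g(1) < 0. If the coefficient sign sequence of g has at most two sign changes and LC(g) < 0 or SC(g) < 0, then either g(t) < 0 for all 0 < t ≤ 1, or g(t) < 0 for all t ≥ 1. -/

import Mathlib

/-- A univariate signomial `g(t) = ∑_{i<d} a i * t ^ ν i`. -/
noncomputable def usig (d : ℕ) (a ν : ℕ → ℝ) (t : ℝ) : ℝ :=
  ∑ i ∈ Finset.range d, a i * t ^ ν i

/-- Number of sign changes in the coefficient sequence `a 0, …, a (d-1)`. -/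
noncomputable def signChanges (d : ℕ) (a : ℕ → ℝ) : ℕ :=
  ((Finset.range (d - 1)).filter (fun i => a i * a (i + 1) < 0)).card

open Finset Filter Real


noncomputable def expSum (d : ℕ) (a ν : ℕ → ℝ) (s : ℝ) : ℝ :=
  ∑ i ∈ Finset.range d, a i * Real.exp (ν i * s)

lemma expSum_cont (d : ℕ) (a ν : ℕ → ℝ) : Continuous (expSum d a ν) := by
  unfold expSum
  refine continuous_finset_sum _ fun i _ => ?_
  have : Continuous fun s : ℝ => Real.exp (ν i * s) :=
    Real.continuous_exp.comp (continuous_const.mul continuous_id)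
  exact continuous_const.mul this

lemma expSum_hasDeriv (d : ℕ) (a ν : ℕ → ℝ) (s : ℝ) :
    HasDerivAt (expSum d a ν) (expSum d (fun i => a i * ν i) ν s) s := by
  have h : ∀ i ∈ Finset.range d,
      HasDerivAt (fun s => a i * Real.exp (ν i * s)) ((a i * ν i) * Real.exp (ν i * s)) s := by
    intro i _
    have h1 : HasDerivAt (fun s : ℝ => ν i * s) (ν i) s := by
      simpa using (hasDerivAt_id s).const_mul (ν i)
    have h3 := h1.exp.const_mul (a i)
    exact h3.congr_deriv (by ring)
  exact HasDerivAt.fun_sum h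

lemma expSum_shift (d : ℕ) (a ν : ℕ → ℝ) (c s : ℝ) :
    expSum d a (fun i => ν i - c) s = Real.exp (-(c * s)) * expSum d a ν s := by
  unfold expSum
  rw [Finset.mul_sum]
  refine Finset.sum_congr rfl fun i _ => ?_
  rw [show (ν i - c) * s = ν i * s + (-(c * s)) by ring, Real.exp_add]
  ring


lemma same_sign (d : ℕ) (a : ℕ → ℝ) (ha : ∀ i ∈ Finset.range d, a i ≠ 0)
    (h0 : signChanges d a = 0) : ∀ i < d, 0 < a 0 * a i := by
  have hemp : ∀ n ∈ Finset.range (d - 1), ¬ (a n * a (n + 1) < 0) := by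
    intro n hn hlt
    have : ((Finset.range (d - 1)).filter (fun i => a i * a (i + 1) < 0)).Nonempty :=
      ⟨n, Finset.mem_filter.2 ⟨hn, hlt⟩⟩
    have hpos := Finset.card_pos.2 this
    unfold signChanges at h0
    omega
  intro i hid
  induction i with
  | zero => exact mul_self_pos.2 (ha 0 (Finset.mem_range.2 hid))
  | succ n ihn =>
    have h1 : 0 < a 0 * a n := ihn (Nat.lt_of_succ_lt hid)
    have hn1 : n ∈ Finset.range (d - 1) := Finset.mem_range.2 (by omega)
    have h2 : 0 ≤ a n * a (n + 1) := le_of_not_gt (hemp n hn1)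
    have h3 : a n ≠ 0 := ha n (Finset.mem_range.2 (by omega))
    have h4 : a (n + 1) ≠ 0 := ha (n + 1) (Finset.mem_range.2 hid)
    have h5 : 0 < a n * a (n + 1) := lt_of_le_of_ne h2 (Ne.symm (mul_ne_zero h3 h4))
    nlinarith [mul_self_pos.2 h3]

lemma signChanges_mul (d p : ℕ) (a ν : ℕ → ℝ) (c : ℝ)
    (hmono : ∀ i j : ℕ, i < j → j < d → ν i < ν j)
    (hp : p + 1 < d) (hc1 : ν p < c) (hc2 : c < ν (p + 1))
    (hch : a p * a (p + 1) < 0) :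
    signChanges d (fun i => a i * (ν i - c)) + 1 = signChanges d a := by
  classical
  unfold signChanges
  have key : (Finset.range (d - 1)).filter (fun i => a i * a (i + 1) < 0)
      = insert p ((Finset.range (d - 1)).filter
        (fun i => (a i * (ν i - c)) * (a (i + 1) * (ν (i + 1) - c)) < 0)) := by
    ext i
    simp only [Finset.mem_insert, Finset.mem_filter, Finset.mem_range]
    constructor
    · rintro ⟨hir, hia⟩
      by_cases hip : i = p
      · exact Or.inl hip
      · refine Or.inr ⟨hir, ?_⟩
        have hK : 0 < (ν i - c) * (ν (i + 1) - c) := by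
          rcases lt_or_gt_of_ne hip with h | h
          · -- i < p, so i+1 ≤ p, ν (i+1) ≤ ν p < c
            have hle : ν (i + 1) ≤ ν p := by
              rcases Nat.lt_or_ge (i + 1) p with h' | h'
              · exact le_of_lt (hmono _ _ h' (by omega))
              · have : i + 1 = p := by omega
                rw [this]
            have hlt1 : ν i < ν (i + 1) := hmono _ _ (Nat.lt_succ_self i) (by omega)
            have : ν i - c < 0 := by linarith
            have : ν (i + 1) - c < 0 := by linarith
            nlinarith
          · -- i > p, so i ≥ p+1, c < ν (p+1) ≤ ν i
            have hle : ν (p + 1) ≤ ν i := by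
              rcases Nat.lt_or_ge (p + 1) i with h' | h'
              · exact le_of_lt (hmono _ _ h' (by omega))
              · have : p + 1 = i := by omega
                rw [this]
            have hlt1 : ν i < ν (i + 1) := hmono _ _ (Nat.lt_succ_self i) (by omega)
            have : 0 < ν i - c := by linarith
            have : 0 < ν (i + 1) - c := by linarith
            nlinarith
        nlinarith [mul_neg_of_neg_of_pos hia hK]
    · rintro (hip | ⟨hir, hib⟩)
      · subst hip
        exact ⟨by omega, hch⟩
      · refine ⟨hir, ?_⟩
        by_cases hip : i = p
        · subst hip; exact hch
        · have hK : 0 < (ν i - c) * (ν (i + 1) - c) := by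
            rcases lt_or_gt_of_ne hip with h | h
            · have hle : ν (i + 1) ≤ ν p := by
                rcases Nat.lt_or_ge (i + 1) p with h' | h'
                · exact le_of_lt (hmono _ _ h' (by omega))
                · have : i + 1 = p := by omega
                  rw [this]
              have hlt1 : ν i < ν (i + 1) := hmono _ _ (Nat.lt_succ_self i) (by omega)
              have : ν i - c < 0 := by linarith
              have : ν (i + 1) - c < 0 := by linarith
              nlinarith
            · have hle : ν (p + 1) ≤ ν i := by
                rcases Nat.lt_or_ge (p + 1) i with h' | h'
                · exact le_of_lt (hmono _ _ h' (by omega))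
                · have : p + 1 = i := by omega
                  rw [this]
              have hlt1 : ν i < ν (i + 1) := hmono _ _ (Nat.lt_succ_self i) (by omega)
              have : 0 < ν i - c := by linarith
              have : 0 < ν (i + 1) - c := by linarith
              nlinarith
          by_contra hge
          have hge' : 0 ≤ a i * a (i + 1) := le_of_not_gt hge
          nlinarith [mul_nonneg hge' hK.le]
  have hpnot : p ∉ (Finset.range (d - 1)).filter
      (fun i => (a i * (ν i - c)) * (a (i + 1) * (ν (i + 1) - c)) < 0) := by
    simp only [Finset.mem_filter, Finset.mem_range, not_and]
    intro _
    have h1 : ν p - c < 0 := by linarith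
    have h2 : 0 < ν (p + 1) - c := by linarith
    have hK : (ν p - c) * (ν (p + 1) - c) < 0 := mul_neg_of_neg_of_pos h1 h2
    intro hlt
    nlinarith [mul_pos_of_neg_of_neg hch hK]
  rw [key, Finset.card_insert_of_notMem hpnot]

lemma no_many_zeros : ∀ (m d : ℕ) (a ν : ℕ → ℝ), 0 < d →
    (∀ i ∈ Finset.range d, a i ≠ 0) →
    (∀ i j : ℕ, i < j → j < d → ν i < ν j) →
    signChanges d a ≤ m →
    ∀ z : ℕ → ℝ, (∀ i j : ℕ, i < j → j ≤ m → z i < z j) →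
    (∀ i ≤ m, expSum d a ν (z i) = 0) → False := by
  intro m
  induction m with
  | zero =>
    intro d a ν hd ha hmono hsc z hz hzero
    have h0 : signChanges d a = 0 := Nat.le_zero.1 hsc
    have hss := same_sign d a ha h0
    have hpos : 0 < a 0 * expSum d a ν (z 0) := by
      unfold expSum
      rw [Finset.mul_sum]
      refine Finset.sum_pos (fun i hi => ?_) ⟨0, Finset.mem_range.2 hd⟩
      have := hss i (Finset.mem_range.1 hi)
      have he := Real.exp_pos (ν i * z 0)
      nlinarith
    rw [hzero 0 le_rfl] at hpos
    simp at hpos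
  | succ n ih =>
    intro d a ν hd ha hmono hsc z hz hzero
    by_cases hsc' : signChanges d a ≤ n
    · exact ih d a ν hd ha hmono hsc' z
        (fun i j hij hj => hz i j hij (Nat.le_succ_of_le hj))
        (fun i hi => hzero i (Nat.le_succ_of_le hi))
    · -- there is a sign change
      have hne : ((Finset.range (d - 1)).filter (fun i => a i * a (i + 1) < 0)).Nonempty := by
        rw [← Finset.card_pos]
        have h' : signChanges d a ≠ 0 := fun h => hsc' (h ▸ Nat.zero_le n)
        unfold signChanges at h'
        omega
      obtain ⟨p, hpmem⟩ := hne
      rw [Finset.mem_filter, Finset.mem_range] at hpmem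
      obtain ⟨hpr, hch⟩ := hpmem
      have hp1 : p + 1 < d := by omega
      set c : ℝ := (ν p + ν (p + 1)) / 2 with hc
      have hνp : ν p < ν (p + 1) := hmono p (p + 1) (Nat.lt_succ_self p) hp1
      have hc1 : ν p < c := by rw [hc]; linarith
      have hc2 : c < ν (p + 1) := by rw [hc]; linarith
      set ν' : ℕ → ℝ := fun i => ν i - c with hν'
      set b : ℕ → ℝ := fun i => a i * (ν' i) with hb
      have hν'mono : ∀ i j : ℕ, i < j → j < d → ν' i < ν' j := by
        intro i j hij hjd
        simp only [hν']
        have := hmono i j hij hjd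
        linarith
      have hbne : ∀ i ∈ Finset.range d, b i ≠ 0 := by
        intro i hi
        have hai := ha i hi
        have : ν' i ≠ 0 := by
          simp only [hν']
          rcases Nat.lt_or_ge i (p + 1) with h | h
          · have : ν i ≤ ν p := by
              rcases Nat.lt_or_ge i p with h' | h'
              · exact le_of_lt (hmono i p h' (by omega))
              · have : i = p := by omega
                rw [this]
            intro h0; rw [sub_eq_zero] at h0; linarith
          · have : ν (p + 1) ≤ ν i := by
              rcases Nat.lt_or_ge (p + 1) i with h' | h'
              · exact le_of_lt (hmono (p + 1) i h' (Finset.mem_range.1 hi))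
              · have : p + 1 = i := by omega
                rw [this]
            intro h0; rw [sub_eq_zero] at h0; linarith
        exact mul_ne_zero hai this
      have hscb : signChanges d b + 1 = signChanges d a :=
        signChanges_mul d p a ν c hmono hp1 hc1 hc2 hch
      have hscb' : signChanges d b ≤ n := by omega
      -- h := expSum d a ν' has the same zeros as expSum d a ν
      have hhz : ∀ i ≤ n + 1, expSum d a ν' (z i) = 0 := by
        intro i hi
        have := expSum_shift d a ν c (z i)
        simp only [hν']
        rw [this, hzero i hi, mul_zero]
      -- Rolle between consecutive zeros
      have hrolle : ∀ i : ℕ, ∃ w : ℝ, i ≤ n →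
          (z i < w ∧ w < z (i + 1) ∧ expSum d b ν' w = 0) := by
        intro i
        by_cases hi : i ≤ n
        · have hlt : z i < z (i + 1) := hz i (i + 1) (Nat.lt_succ_self i) (by omega)
          have heq : expSum d a ν' (z i) = expSum d a ν' (z (i + 1)) := by
            rw [hhz i (by omega), hhz (i + 1) (by omega)]
          obtain ⟨w, hw, hw0⟩ := exists_hasDerivAt_eq_zero hlt
            (expSum_cont d a ν').continuousOn heq
            (fun x _ => by
              have := expSum_hasDeriv d a ν' x
              simpa only [hb] using this)
          exact ⟨w, fun _ => ⟨hw.1, hw.2, hw0⟩⟩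
        · exact ⟨0, fun h => absurd h hi⟩
      choose w hw using hrolle
      refine ih d b ν' hd hbne hν'mono hscb' w (fun i j hij hj => ?_) (fun i hi => (hw i hi).2.2)
      have h1 := (hw i (by omega)).2.1
      have h2 := (hw j hj).1
      calc w i < z (i + 1) := h1
        _ ≤ z j := by
          rcases Nat.lt_or_ge (i + 1) j with h | h
          · exact le_of_lt (hz (i + 1) j h (by omega))
          · have : i + 1 = j := by omega
            rw [this]
        _ < w j := h2

lemma expSum_tendsto_atTop (d : ℕ) (a ν : ℕ → ℝ) (hd : 0 < d)
    (hmono : ∀ i j : ℕ, i < j → j < d → ν i < ν j) :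
    Tendsto (fun s => Real.exp (-(ν (d - 1) * s)) * expSum d a ν s) atTop (nhds (a (d - 1))) := by
  have heq : ∀ s : ℝ, Real.exp (-(ν (d - 1) * s)) * expSum d a ν s
      = expSum d a (fun i => ν i - ν (d - 1)) s := fun s => (expSum_shift d a ν (ν (d - 1)) s).symm
  simp only [heq]
  unfold expSum
  have hlim : ∀ i ∈ Finset.range d,
      Tendsto (fun s : ℝ => a i * Real.exp ((ν i - ν (d - 1)) * s)) atTop
        (nhds (if i = d - 1 then a i else 0)) := by
    intro i hi
    by_cases hie : i = d - 1
    · subst hie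
      simp only [sub_self, zero_mul, Real.exp_zero, mul_one, if_pos rfl]
      exact tendsto_const_nhds
    · rw [if_neg hie]
      have hilt : i < d - 1 := by
        have := Finset.mem_range.1 hi
        omega
      have hk : ν i - ν (d - 1) < 0 := by
        have := hmono i (d - 1) hilt (by omega)
        linarith
      have h1 : Tendsto (fun s : ℝ => (ν i - ν (d - 1)) * s) atTop atBot :=
        (tendsto_const_mul_atBot_of_neg hk).2 tendsto_id
      have h2 : Tendsto (fun s : ℝ => Real.exp ((ν i - ν (d - 1)) * s)) atTop (nhds 0) :=
        Real.tendsto_exp_atBot.comp h1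
      simpa using h2.const_mul (a i)
  have := tendsto_finset_sum (Finset.range d) hlim
  rwa [Finset.sum_ite_eq' (Finset.range d) (d - 1) a, if_pos (Finset.mem_range.2 (by omega))]
    at this

lemma expSum_tendsto_atBot (d : ℕ) (a ν : ℕ → ℝ) (hd : 0 < d)
    (hmono : ∀ i j : ℕ, i < j → j < d → ν i < ν j) :
    Tendsto (fun s => Real.exp (-(ν 0 * s)) * expSum d a ν s) atBot (nhds (a 0)) := by
  have heq : ∀ s : ℝ, Real.exp (-(ν 0 * s)) * expSum d a ν s
      = expSum d a (fun i => ν i - ν 0) s := fun s => (expSum_shift d a ν (ν 0) s).symm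
  simp only [heq]
  unfold expSum
  have hlim : ∀ i ∈ Finset.range d,
      Tendsto (fun s : ℝ => a i * Real.exp ((ν i - ν 0) * s)) atBot
        (nhds (if i = 0 then a i else 0)) := by
    intro i hi
    by_cases hie : i = 0
    · subst hie
      simp only [sub_self, zero_mul, Real.exp_zero, mul_one, if_pos rfl]
      exact tendsto_const_nhds
    · rw [if_neg hie]
      have hk : 0 < ν i - ν 0 := by
        have := hmono 0 i (Nat.pos_of_ne_zero hie) (Finset.mem_range.1 hi)
        linarith
      have h1 : Tendsto (fun s : ℝ => (ν i - ν 0) * s) atBot atBot :=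
        (tendsto_const_mul_atBot_of_pos hk).2 tendsto_id
      have h2 : Tendsto (fun s : ℝ => Real.exp ((ν i - ν 0) * s)) atBot (nhds 0) :=
        Real.tendsto_exp_atBot.comp h1
      simpa using h2.const_mul (a i)
  have := tendsto_finset_sum (Finset.range d) hlim
  rwa [Finset.sum_ite_eq' (Finset.range d) 0 a, if_pos (Finset.mem_range.2 hd)] at this

lemma expSum_ev_neg_atTop (d : ℕ) (a ν : ℕ → ℝ) (hd : 0 < d)
    (hmono : ∀ i j : ℕ, i < j → j < d → ν i < ν j) (hlc : a (d - 1) < 0) :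
    ∀ N : ℝ, ∃ s, N < s ∧ expSum d a ν s < 0 := by
  intro N
  have h1 := (expSum_tendsto_atTop d a ν hd hmono).eventually_lt_const hlc
  have h2 : ∀ᶠ s : ℝ in atTop, N < s := eventually_gt_atTop N
  obtain ⟨s, hs1, hs2⟩ := (h1.and h2).exists
  refine ⟨s, hs2, ?_⟩
  have he := Real.exp_pos (-(ν (d - 1) * s))
  nlinarith

lemma expSum_ev_neg_atBot (d : ℕ) (a ν : ℕ → ℝ) (hd : 0 < d)
    (hmono : ∀ i j : ℕ, i < j → j < d → ν i < ν j) (htc : a 0 < 0) :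
    ∀ N : ℝ, ∃ s, s < N ∧ expSum d a ν s < 0 := by
  intro N
  have h1 := (expSum_tendsto_atBot d a ν hd hmono).eventually_lt_const htc
  have h2 : ∀ᶠ s : ℝ in atBot, s < N := eventually_lt_atBot N
  obtain ⟨s, hs1, hs2⟩ := (h1.and h2).exists
  refine ⟨s, hs2, ?_⟩
  have he := Real.exp_pos (-(ν 0 * s))
  nlinarith

lemma exists_zero_of_neg_pos (f : ℝ → ℝ) (hf : Continuous f) {p q : ℝ} (hpq : p < q)
    (h1 : f p < 0) (h2 : 0 < f q) : ∃ z, p < z ∧ z < q ∧ f z = 0 := by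
  obtain ⟨z, hz, hz0⟩ := intermediate_value_Ioo hpq.le hf.continuousOn ⟨h1, h2⟩
  exact ⟨z, hz.1, hz.2, hz0⟩

lemma exists_zero_of_pos_neg (f : ℝ → ℝ) (hf : Continuous f) {p q : ℝ} (hpq : p < q)
    (h1 : 0 < f p) (h2 : f q < 0) : ∃ z, p < z ∧ z < q ∧ f z = 0 := by
  obtain ⟨z, hz, hz0⟩ := intermediate_value_Ioo' hpq.le hf.continuousOn ⟨h2, h1⟩
  exact ⟨z, hz.1, hz.2, hz0⟩

lemma main_contra (d : ℕ) (hd : 0 < d) (a ν : ℕ → ℝ)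
    (ha : ∀ i ∈ Finset.range d, a i ≠ 0)
    (hmono : ∀ i j : ℕ, i < j → j < d → ν i < ν j)
    (hsc : signChanges d a ≤ 2)
    (hLCSC : a (d - 1) < 0 ∨ a 0 < 0)
    (h0 : expSum d a ν 0 < 0)
    (s1 s2 : ℝ) (hs1 : s1 < 0) (hs2 : 0 < s2)
    (h1 : 0 ≤ expSum d a ν s1) (h2 : 0 ≤ expSum d a ν s2) : False := by
  set F := expSum d a ν with hF
  have hFc : Continuous F := expSum_cont d a ν
  by_cases hsc0 : signChanges d a = 0
  · -- all coefficients share the sign of a 0, which must be negative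
    have hss := same_sign d a ha hsc0
    have ha0 : a 0 < 0 := by
      rcases hLCSC with h | h
      · have := hss (d - 1) (by omega)
        nlinarith
      · exact h
    have hpos : 0 < a 0 * F s1 := by
      rw [hF]
      unfold expSum
      rw [Finset.mul_sum]
      refine Finset.sum_pos (fun i hi => ?_) ⟨0, Finset.mem_range.2 hd⟩
      have := hss i (Finset.mem_range.1 hi)
      have he := Real.exp_pos (ν i * s1)
      nlinarith
    nlinarith
  · -- a sign change exists
    have hne : ((Finset.range (d - 1)).filter (fun i => a i * a (i + 1) < 0)).Nonempty := by
      rw [← Finset.card_pos]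
      unfold signChanges at hsc0
      omega
    obtain ⟨p, hpmem⟩ := hne
    rw [Finset.mem_filter, Finset.mem_range] at hpmem
    obtain ⟨hpr, hch⟩ := hpmem
    have hp1 : p + 1 < d := by omega
    set c : ℝ := (ν p + ν (p + 1)) / 2 with hc
    have hνp : ν p < ν (p + 1) := hmono p (p + 1) (Nat.lt_succ_self p) hp1
    have hc1 : ν p < c := by rw [hc]; linarith
    have hc2 : c < ν (p + 1) := by rw [hc]; linarith
    set ν' : ℕ → ℝ := fun i => ν i - c with hν'
    set b : ℕ → ℝ := fun i => a i * (ν' i) with hb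
    have hν'mono : ∀ i j : ℕ, i < j → j < d → ν' i < ν' j := by
      intro i j hij hjd
      simp only [hν']
      have := hmono i j hij hjd
      linarith
    have hbne : ∀ i ∈ Finset.range d, b i ≠ 0 := by
      intro i hi
      have hai := ha i hi
      have : ν' i ≠ 0 := by
        simp only [hν']
        rcases Nat.lt_or_ge i (p + 1) with h | h
        · have : ν i ≤ ν p := by
            rcases Nat.lt_or_ge i p with h' | h'
            · exact le_of_lt (hmono i p h' (by omega))
            · have : i = p := by omega
              rw [this]
          intro h0'; rw [sub_eq_zero] at h0'; linarith
        · have : ν (p + 1) ≤ ν i := by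
            rcases Nat.lt_or_ge (p + 1) i with h' | h'
            · exact le_of_lt (hmono (p + 1) i h' (Finset.mem_range.1 hi))
            · have : p + 1 = i := by omega
              rw [this]
          intro h0'; rw [sub_eq_zero] at h0'; linarith
      exact mul_ne_zero hai this
    have hscb : signChanges d b + 1 = signChanges d a :=
      signChanges_mul d p a ν c hmono hp1 hc1 hc2 hch
    have hscb' : signChanges d b ≤ 1 := by omega
    set h : ℝ → ℝ := expSum d a ν' with hh
    have hhF : ∀ s, h s = Real.exp (-(c * s)) * F s := by
      intro s
      rw [hh, hF, hν']
      exact expSum_shift d a ν c s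
    have hderiv : ∀ x : ℝ, HasDerivAt h (expSum d b ν' x) x := by
      intro x
      have := expSum_hasDeriv d a ν' x
      simpa only [hb] using this
    -- three distinct zeros of F give a contradiction
    have T3 : ∀ z1 z2 z3 : ℝ, z1 < z2 → z2 < z3 → F z1 = 0 → F z2 = 0 → F z3 = 0 → False := by
      intro z1 z2 z3 h12 h23 hz1 hz2 hz3
      refine no_many_zeros 2 d a ν hd ha hmono hsc
        (fun n => if n = 0 then z1 else if n = 1 then z2 else z3) ?_ ?_
      · intro i j hij hj
        interval_cases j
        · omega
        · interval_cases i
          simp [h12]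
        · interval_cases i <;> simp [h12, h23, lt_trans h12 h23]
      · intro i hi
        interval_cases i <;> simpa
    -- two distinct zeros of h' give a contradiction
    have T2 : ∀ w1 w2 : ℝ, w1 < w2 → expSum d b ν' w1 = 0 → expSum d b ν' w2 = 0 → False := by
      intro w1 w2 h12 hw1 hw2
      refine no_many_zeros 1 d b ν' hd hbne hν'mono hscb'
        (fun n => if n = 0 then w1 else w2) ?_ ?_
      · intro i j hij hj
        interval_cases j
        · omega
        · interval_cases i
          simp [h12]
      · intro i hi
        interval_cases i <;> simpa
    rcases hLCSC with hlc | htc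
    · -- leading coefficient negative : F < 0 far right
      -- get a zero zL in [s1, 0)
      have hzL : ∃ zL, s1 ≤ zL ∧ zL < 0 ∧ F zL = 0 := by
        rcases eq_or_lt_of_le h1 with heq | hlt
        · exact ⟨s1, le_refl _, hs1, heq.symm⟩
        · obtain ⟨z, hz1, hz2, hz3⟩ := exists_zero_of_pos_neg F hFc hs1 hlt h0
          exact ⟨z, le_of_lt hz1, hz2, hz3⟩
      obtain ⟨zL, _, hzL0, hzLz⟩ := hzL
      by_cases hpos : ∃ q, 0 < q ∧ 0 < F q
      · obtain ⟨q, hq0, hqF⟩ := hpos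
        obtain ⟨z2', hz2a, hz2b, hz2c⟩ := exists_zero_of_neg_pos F hFc hq0 h0 hqF
        obtain ⟨sT, hsT1, hsT2⟩ := expSum_ev_neg_atTop d a ν hd hmono hlc q
        obtain ⟨z3', hz3a, hz3b, hz3c⟩ := exists_zero_of_pos_neg F hFc hsT1 hqF hsT2
        exact T3 zL z2' z3' (lt_trans hzL0 hz2a) (lt_trans hz2b hz3a) hzLz hz2c hz3c
      · push_neg at hpos
        have hFs2 : F s2 = 0 := le_antisymm (hpos s2 hs2) h2
        have hloc : IsLocalMax h s2 := by
          have hmem : Set.Ioi (0:ℝ) ∈ nhds s2 := Ioi_mem_nhds hs2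
          refine Filter.eventually_of_mem hmem fun x hx => ?_
          rw [hhF x, hhF s2, hFs2, mul_zero]
          have := hpos x hx
          have he := Real.exp_pos (-(c * x))
          nlinarith
        have hd2 : expSum d b ν' s2 = 0 := hloc.hasDerivAt_eq_zero (hderiv s2)
        have hhzL : h zL = 0 := by rw [hhF zL, hzLz, mul_zero]
        have hhs2 : h s2 = 0 := by rw [hhF s2, hFs2, mul_zero]
        obtain ⟨w, hw, hw0⟩ := exists_hasDerivAt_eq_zero (lt_trans hzL0 hs2)
          (expSum_cont d a ν').continuousOn (hhzL.trans hhs2.symm)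
          (fun x _ => hderiv x)
        exact T2 w s2 hw.2 hw0 hd2
    · -- trailing coefficient negative : F < 0 far left
      have hzR : ∃ zR, 0 < zR ∧ zR ≤ s2 ∧ F zR = 0 := by
        rcases eq_or_lt_of_le h2 with heq | hlt
        · exact ⟨s2, hs2, le_refl _, heq.symm⟩
        · obtain ⟨z, hz1, hz2, hz3⟩ := exists_zero_of_neg_pos F hFc hs2 h0 hlt
          exact ⟨z, hz1, le_of_lt hz2, hz3⟩
      obtain ⟨zR, hzR0, _, hzRz⟩ := hzR
      by_cases hpos : ∃ q, q < 0 ∧ 0 < F q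
      · obtain ⟨q, hq0, hqF⟩ := hpos
        obtain ⟨z2', hz2a, hz2b, hz2c⟩ := exists_zero_of_pos_neg F hFc hq0 hqF h0
        obtain ⟨sB, hsB1, hsB2⟩ := expSum_ev_neg_atBot d a ν hd hmono htc q
        obtain ⟨z1', hz1a, hz1b, hz1c⟩ := exists_zero_of_neg_pos F hFc hsB1 hsB2 hqF
        exact T3 z1' z2' zR (lt_trans hz1b hz2a) (lt_trans hz2b hzR0) hz1c hz2c hzRz
      · push_neg at hpos
        have hFs1 : F s1 = 0 := le_antisymm (hpos s1 hs1) h1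
        have hloc : IsLocalMax h s1 := by
          have hmem : Set.Iio (0:ℝ) ∈ nhds s1 := Iio_mem_nhds hs1
          refine Filter.eventually_of_mem hmem fun x hx => ?_
          rw [hhF x, hhF s1, hFs1, mul_zero]
          have := hpos x hx
          have he := Real.exp_pos (-(c * x))
          nlinarith
        have hd1 : expSum d b ν' s1 = 0 := hloc.hasDerivAt_eq_zero (hderiv s1)
        have hhzR : h zR = 0 := by rw [hhF zR, hzRz, mul_zero]
        have hhs1 : h s1 = 0 := by rw [hhF s1, hFs1, mul_zero]
        obtain ⟨w, hw, hw0⟩ := exists_hasDerivAt_eq_zero (lt_trans hs1 hzR0)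
          (expSum_cont d a ν').continuousOn (hhs1.trans hhzR.symm)
          (fun x _ => hderiv x)
        exact T2 s1 w hw.1 hd1 hw0

lemma usig_eq_expSum (d : ℕ) (a ν : ℕ → ℝ) (t : ℝ) (ht : 0 < t) :
    usig d a ν t = expSum d a ν (Real.log t) := by
  unfold usig expSum
  refine Finset.sum_congr rfl fun i _ => ?_
  rw [Real.rpow_def_of_pos ht, mul_comm (Real.log t)]

theorem stmt_2 (d : ℕ) (hd : 0 < d) (a ν : ℕ → ℝ)
    (ha : ∀ i ∈ Finset.range d, a i ≠ 0)
    (hν : ∀ i j : ℕ, i < j → j < d → ν i < ν j)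
    (h1 : usig d a ν 1 < 0)
    (hLCSC : a (d - 1) < 0 ∨ a 0 < 0)
    (hsc : signChanges d a ≤ 2) :
    (∀ t : ℝ, 0 < t → t ≤ 1 → usig d a ν t < 0) ∨
    (∀ t : ℝ, 1 ≤ t → usig d a ν t < 0) := by
  by_contra hcon
  push_neg at hcon
  obtain ⟨⟨u, hu0, hu1, hgu⟩, ⟨v, hv1, hgv⟩⟩ := hcon
  have h10 : expSum d a ν 0 < 0 := by
    have := usig_eq_expSum d a ν 1 one_pos
    rw [this, Real.log_one] at h1
    exact h1
  have hu1' : u < 1 := by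
    rcases lt_or_eq_of_le hu1 with h | h
    · exact h
    · subst h; linarith
  have hv1' : 1 < v := by
    rcases lt_or_eq_of_le hv1 with h | h
    · exact h
    · subst h; linarith
  have hs1 : Real.log u < 0 := Real.log_neg hu0 hu1'
  have hs2 : 0 < Real.log v := Real.log_pos hv1'
  have hgu' : 0 ≤ expSum d a ν (Real.log u) := by
    rw [← usig_eq_expSum d a ν u hu0]; exact hgu
  have hgv' : 0 ≤ expSum d a ν (Real.log v) := by
    rw [← usig_eq_expSum d a ν v (by linarith)]; exact hgv
  exact main_contra d hd a ν ha hν hsc hLCSC h10 (Real.log u) (Real.log v) hs1 hs2 hgu' hgv'
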